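/- Let s ∈ ℝ with s > 2 and define A(s;x) = −(1/π)·Im F*(s;x), where F*(s;x) = 2·Γ(s+1)/(2π)^s · e^{−iπs/2} · ∑_{k=1}^∞ e^{2πikx}/k^s. Then for every x ∈ ℝ, the function y ↦ A(s;y) has derivative s·A(s−1;x) at x; that is, ∂ₓA(s;x) = s·A(s−1;x). (This is the A-side umbral ladder.) -/

import Mathlib

open Real Complex

/-- The polylogarithm on the unit circle: `Li_s(e^{2πix}) = ∑_{k=1}^∞ e^{2πikx}/k^s`. -/
noncomputable def liCircle (s : ℂ) (x : ℝ) : ℂ :=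
  ∑' k : ℕ+, Complex.exp (2 * Real.pi * Complex.I * k * x) / (k : ℂ) ^ s

/-- The master function `F*(s;x) = 2·Γ(s+1)/(2π)^s · e^{−iπs/2} · Li_s(e^{2πix})`. -/
noncomputable def Fstar (s : ℂ) (x : ℝ) : ℂ :=
  2 * Complex.Gamma (s + 1) / (2 * Real.pi : ℂ) ^ s *
    Complex.exp (-Real.pi * Complex.I * s / 2) * liCircle s x

/-- The analytic Clausen-type function `A(s;x) = −(1/π)·Im F*(s;x)` for real `s`. -/
noncomputable def analyticA (s : ℝ) (x : ℝ) : ℝ := -(1 / Real.pi) * (Fstar s x).im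

lemma exp_abs_one (k : ℕ+) (y : ℝ) :
    ‖Complex.exp (2 * Real.pi * Complex.I * k * y)‖ = 1 := by
  rw [Complex.norm_exp]
  have : (2 * (Real.pi:ℂ) * Complex.I * k * y).re = 0 := by simp
  rw [this, Real.exp_zero]

lemma cpow_abs' (s : ℝ) (k : ℕ+) : ‖(k : ℂ) ^ (s : ℂ)‖ = (k : ℝ) ^ s := by
  have hk : (0:ℝ) < (k : ℕ) := by exact_mod_cast k.pos
  have : ((k : ℕ+) : ℂ) = ((k : ℕ) : ℝ) := by push_cast; ring
  rw [this, Complex.norm_cpow_eq_rpow_re_of_pos hk]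
  simp

lemma li_summable (s : ℝ) (hs : 1 < s) (x : ℝ) :
    Summable fun k : ℕ+ => Complex.exp (2 * Real.pi * Complex.I * k * x) / (k : ℂ) ^ (s : ℂ) := by
  have h : Summable fun k : ℕ+ => (k : ℝ) ^ (-s) := by
    have := (summable_nat_rpow (p := -s)).2 (by linarith)
    exact this.subtype _
  apply Summable.of_norm
  apply h.of_nonneg_of_le (fun k => norm_nonneg _)
  intro k
  have hk : (0:ℝ) < (k : ℕ) := by exact_mod_cast k.pos
  rw [norm_div, exp_abs_one, cpow_abs',
    Real.rpow_neg hk.le]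
  simp [le_refl]

lemma li_hasDerivAt (s : ℝ) (hs : 2 < s) (x : ℝ) :
    HasDerivAt (fun y : ℝ => liCircle s y)
      (2 * Real.pi * Complex.I * liCircle ((s : ℂ) - 1) x) x := by
  have key : HasDerivAt (fun y : ℝ => ∑' k : ℕ+,
        Complex.exp (2 * Real.pi * Complex.I * k * y) / (k : ℂ) ^ (s : ℂ))
      (∑' k : ℕ+, (2 * Real.pi * Complex.I * k) *
        Complex.exp (2 * Real.pi * Complex.I * k * x) / (k : ℂ) ^ (s : ℂ)) x := by
    apply hasDerivAt_tsum (u := fun k : ℕ+ => 2 * Real.pi * (k : ℝ) ^ (1 - s))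
      (g := fun (k : ℕ+) (y : ℝ) => Complex.exp (2 * Real.pi * Complex.I * k * y) / (k : ℂ) ^ (s : ℂ))
      (g' := fun (k : ℕ+) (y : ℝ) => (2 * Real.pi * Complex.I * k) *
        Complex.exp (2 * Real.pi * Complex.I * k * y) / (k : ℂ) ^ (s : ℂ))
      (y₀ := x)
    · have := (summable_nat_rpow (p := 1 - s)).2 (by linarith)
      exact (this.subtype _).mul_left _
    · intro k y
      have h1 : HasDerivAt (fun z : ℂ => Complex.exp (2 * Real.pi * Complex.I * k * z))
          ((2 * Real.pi * Complex.I * k) * Complex.exp (2 * Real.pi * Complex.I * k * y)) y := by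
        simpa [mul_comm, Function.comp_def] using
          ((Complex.hasDerivAt_exp _).comp _ ((hasDerivAt_id ((y:ℝ):ℂ)).const_mul (2 * Real.pi * Complex.I * k)))
      exact (h1.comp_ofReal).div_const _
    · intro k y
      have hk : (0:ℝ) < (k : ℕ) := by exact_mod_cast k.pos
      rw [norm_div, norm_mul, exp_abs_one, cpow_abs',
        mul_one]
      have h3 : ‖(2 * Real.pi * Complex.I * k : ℂ)‖ = 2 * Real.pi * (k : ℝ) := by
        simp [_root_.abs_of_nonneg Real.pi_nonneg, Real.pi_nonneg, mul_nonneg]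
      rw [h3, Real.rpow_sub hk, Real.rpow_one, mul_div_assoc]
    · exact li_summable s (by linarith) x
  have heq : (∑' k : ℕ+, (2 * Real.pi * Complex.I * k) *
        Complex.exp (2 * Real.pi * Complex.I * k * x) / (k : ℂ) ^ (s : ℂ))
      = 2 * Real.pi * Complex.I * liCircle ((s : ℂ) - 1) x := by
    rw [liCircle, ← tsum_mul_left]
    congr 1; funext k
    have hk0 : ((k : ℕ+) : ℂ) ≠ 0 := by exact_mod_cast k.ne_zero
    have hpow : ((k : ℕ+) : ℂ) ^ ((s : ℂ) - 1) = (k : ℂ) ^ (s : ℂ) / (k : ℂ) := by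
      rw [Complex.cpow_sub _ _ hk0, Complex.cpow_one]
    rw [hpow]
    have hp : ((k : ℕ+) : ℂ) ^ (s : ℂ) ≠ 0 := by
      simp [Complex.cpow_eq_zero_iff, hk0]
    field_simp
  rw [liCircle] at *
  rw [← heq]
  exact key


lemma exp_neg_pi_I_div_two : Complex.exp (-(Real.pi:ℂ) * Complex.I / 2) = -Complex.I := by
  rw [show (-(Real.pi:ℂ) * Complex.I / 2) = ((-(Real.pi/2) : ℝ) : ℂ) * Complex.I by
    push_cast; ring, Complex.exp_mul_I]
  simp

lemma Fstar_hasDerivAt (s : ℝ) (hs : 2 < s) (x : ℝ) :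
    HasDerivAt (fun y : ℝ => Fstar s y) ((s : ℂ) * Fstar ((s : ℂ) - 1) x) x := by
  have h2pi : (2 * (Real.pi:ℂ)) ≠ 0 := by
    simp [Real.pi_ne_zero]
  have hP : (2 * (Real.pi:ℂ)) ^ ((s:ℂ) - 1) ≠ 0 := by
    simp [Complex.cpow_eq_zero_iff, h2pi]
  have hs0 : (s : ℂ) ≠ 0 := by
    exact_mod_cast (by positivity : (s:ℝ) ≠ 0)
  have hGamma : Complex.Gamma ((s:ℂ) + 1) = (s:ℂ) * Complex.Gamma (s:ℂ) :=
    Complex.Gamma_add_one _ hs0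
  have hpow : (2 * (Real.pi:ℂ)) ^ ((s:ℂ) - 1) = (2 * (Real.pi:ℂ)) ^ (s:ℂ) / (2 * (Real.pi:ℂ)) := by
    rw [Complex.cpow_sub _ _ h2pi, Complex.cpow_one]
  have hexp : Complex.exp (-(Real.pi:ℂ) * Complex.I * (s:ℂ) / 2)
      = Complex.exp (-(Real.pi:ℂ) * Complex.I * ((s:ℂ) - 1) / 2) * (-Complex.I) := by
    rw [← exp_neg_pi_I_div_two, ← Complex.exp_add]
    congr 1; ring
  have hconst : 2 * Complex.Gamma ((s:ℂ) + 1) / (2 * Real.pi : ℂ) ^ (s:ℂ) *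
      Complex.exp (-Real.pi * Complex.I * (s:ℂ) / 2) * (2 * Real.pi * Complex.I)
      = (s:ℂ) * (2 * Complex.Gamma (((s:ℂ) - 1) + 1) / (2 * Real.pi : ℂ) ^ ((s:ℂ) - 1) *
        Complex.exp (-Real.pi * Complex.I * ((s:ℂ) - 1) / 2)) := by
    rw [show ((s:ℂ) - 1) + 1 = (s:ℂ) by ring, hGamma, hpow]
    rw [show (-(Real.pi:ℂ) * Complex.I * (s:ℂ) / 2 : ℂ)
        = -(Real.pi:ℂ) * Complex.I * ((s:ℂ) - 1) / 2 + -(Real.pi:ℂ) * Complex.I / 2 by ring]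
    rw [Complex.exp_add, exp_neg_pi_I_div_two]
    have hQ : (2 * (Real.pi:ℂ)) ^ (s:ℂ) ≠ 0 := by
      simp [Complex.cpow_eq_zero_iff, h2pi]
    field_simp
    ring_nf
    simp [Complex.I_sq]
  have h := (li_hasDerivAt s hs x).const_mul
    (2 * Complex.Gamma ((s:ℂ) + 1) / (2 * Real.pi : ℂ) ^ (s:ℂ) *
      Complex.exp (-Real.pi * Complex.I * (s:ℂ) / 2))
  have : HasDerivAt (fun y : ℝ => Fstar s y)
      (2 * Complex.Gamma ((s:ℂ) + 1) / (2 * Real.pi : ℂ) ^ (s:ℂ) *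
        Complex.exp (-Real.pi * Complex.I * (s:ℂ) / 2) *
        (2 * Real.pi * Complex.I * liCircle ((s:ℂ) - 1) x)) x := by
    simpa [Fstar, mul_comm] using h
  convert this using 1
  rw [Fstar, ← mul_assoc, ← hconst]
  ring

/-- A-side umbral ladder: for real `s > 2`, `∂ₓ A(s;x) = s · A(s−1;x)`. -/
theorem analyticA_hasDerivAt (s : ℝ) (hs : 2 < s) (x : ℝ) :
    HasDerivAt (fun y : ℝ => analyticA s y) (s * analyticA (s - 1) x) x := by
  have h := Fstar_hasDerivAt s hs x
  have him : HasDerivAt (fun y : ℝ => (Fstar s y).im)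
      (((s : ℂ) * Fstar ((s : ℂ) - 1) x).im) x := by
    simpa [Function.comp_def] using (Complex.imCLM.hasFDerivAt.comp x h.hasFDerivAt).hasDerivAt
  have h2 := him.const_mul (-(1 / Real.pi))
  have hcast : ((s - 1 : ℝ) : ℂ) = (s : ℂ) - 1 := by push_cast; ring
  convert h2 using 1
  case e'_4 => rfl
  case e'_5 => rfl
  case e'_8 => rfl
  rw [analyticA, hcast]
  simp [Complex.mul_im]
  ring
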